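/- Let q be a power of a prime p, and for each prime power Q let ρ̄_Q denote the mean value lim_{x→∞} (1/x) ∑_{n ≤ x} φ(Q^n − 1)/Q^n (which exists and is positive). Then liminf_{i→∞} ρ̄_{q^i} = 0; that is, for every ε > 0 there exist infinitely many positive integers i such that ρ̄_{q^i} < ε. -/

import Mathlib

open Filter Finset

/-- Euler product bound for the totient: `φ(M)/M ≤ ∏_{ℓ ∈ S} (1 - 1/ℓ)` for any
subset `S` of the prime factors of `M`. -/
lemma totient_div_le_prod {M : ℕ} (hM : 0 < M) {S : Finset ℕ}
    (hS : S ⊆ M.primeFactors) :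
    (M.totient : ℝ) / M ≤ ∏ ℓ ∈ S, (1 - (ℓ : ℝ)⁻¹) := by
  have hfac : ∀ ℓ ∈ M.primeFactors, 0 ≤ 1 - (ℓ : ℝ)⁻¹ ∧ 1 - (ℓ : ℝ)⁻¹ ≤ 1 := by
    intro ℓ hℓ
    have h2 : 2 ≤ ℓ := (Nat.prime_of_mem_primeFactors hℓ).two_le
    have hℓpos : (0 : ℝ) < ℓ := by positivity
    constructor
    · have : (ℓ : ℝ)⁻¹ ≤ 1 := by
        rw [inv_le_one_iff₀]; right; exact_mod_cast h2.trans' (by norm_num)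
      linarith
    · have : (0 : ℝ) ≤ (ℓ : ℝ)⁻¹ := by positivity
      linarith
  have hQ := Nat.totient_eq_mul_prod_factors M
  have hR : (M.totient : ℝ) = M * ∏ ℓ ∈ M.primeFactors, (1 - (ℓ : ℝ)⁻¹) := by
    have := congrArg (fun x : ℚ => (x : ℝ)) hQ
    push_cast at this
    exact_mod_cast this
  have hMne : (M : ℝ) ≠ 0 := by positivity
  rw [hR, mul_comm, mul_div_assoc, div_self hMne, mul_one]
  rw [← Finset.prod_sdiff hS]
  have h1 : ∏ ℓ ∈ M.primeFactors \ S, (1 - (ℓ : ℝ)⁻¹) ≤ 1 :=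
    Finset.prod_le_one (fun ℓ hℓ => (hfac ℓ (Finset.mem_sdiff.mp hℓ).1).1)
      (fun ℓ hℓ => (hfac ℓ (Finset.mem_sdiff.mp hℓ).1).2)
  have h2 : 0 ≤ ∏ ℓ ∈ S, (1 - (ℓ : ℝ)⁻¹) :=
    Finset.prod_nonneg fun ℓ hℓ => (hfac ℓ (hS hℓ)).1
  calc (∏ ℓ ∈ M.primeFactors \ S, (1 - (ℓ : ℝ)⁻¹)) * ∏ ℓ ∈ S, (1 - (ℓ : ℝ)⁻¹)
      ≤ 1 * ∏ ℓ ∈ S, (1 - (ℓ : ℝ)⁻¹) := mul_le_mul_of_nonneg_right h1 h2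
    _ = ∏ ℓ ∈ S, (1 - (ℓ : ℝ)⁻¹) := one_mul _

/-- Let `q` be a power of a prime `p` and, for each `i ≥ 1`, let `ρ̄_{q^i}` be the mean
value of `n ↦ φ((q^i)^n - 1)/(q^i)^n` (which exists and is positive).  Then
`liminf_{i → ∞} ρ̄_{q^i} = 0`: for every `ε > 0` there are infinitely many `i` with
`ρ̄_{q^i} < ε`. -/
theorem liminf_mean_density_primitive_eq_zero
    (p : ℕ) (hp : p.Prime) (m : ℕ) (hm : 0 < m) (q : ℕ) (hq : q = p ^ m)
    (rbar : ℕ → ℝ)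
    (hrbar : ∀ i : ℕ, 1 ≤ i →
      Tendsto
        (fun x : ℝ =>
          (∑ n ∈ Finset.Icc 1 ⌊x⌋₊,
            (Nat.totient ((q ^ i) ^ n - 1) : ℝ) / ((q : ℝ) ^ i) ^ n) / x)
        atTop (nhds (rbar i)))
    (hpos : ∀ i : ℕ, 1 ≤ i → 0 < rbar i) :
    ∀ ε : ℝ, 0 < ε → ∀ i₀ : ℕ, ∃ i : ℕ, i₀ ≤ i ∧ 1 ≤ i ∧ rbar i < ε := by
  intro ε hε i₀
  classical
  have hq2 : 2 ≤ q := by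
    rw [hq]
    calc 2 ≤ p := hp.two_le
    _ ≤ p ^ m := Nat.le_self_pow hm.ne' p
  -- the sum of reciprocals of primes diverges
  have hdiv : Tendsto (fun N => ∑ n ∈ Finset.range N,
      Set.indicator {r | r.Prime} (fun n : ℕ => (1 : ℝ) / n) n) atTop atTop := by
    refine (not_summable_iff_tendsto_nat_atTop_of_nonneg ?_).mp not_summable_one_div_on_primes
    intro n; exact Set.indicator_nonneg (fun k _ => by positivity) n
  obtain ⟨N, hN⟩ := (hdiv.eventually_gt_atTop ((-Real.log ε) + 1 / p + 1)).exists
  set S : Finset ℕ := (Finset.range N).filter (fun ℓ => ℓ.Prime ∧ ℓ ≠ p) with hSdef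
  have hSprime : ∀ ℓ ∈ S, ℓ.Prime ∧ ℓ ≠ p := by
    intro ℓ hℓ; exact (Finset.mem_filter.mp hℓ).2
  -- the sum over S is large
  have hsumS : (-Real.log ε) < ∑ ℓ ∈ S, (1 : ℝ) / ℓ := by
    set F : Finset ℕ := (Finset.range N).filter Nat.Prime with hFdef
    have h0 : ∑ n ∈ Finset.range N,
        Set.indicator {r | r.Prime} (fun n : ℕ => (1 : ℝ) / n) n
        = ∑ ℓ ∈ F, (1 : ℝ) / ℓ := by
      rw [hFdef, Finset.sum_filter]
      refine Finset.sum_congr rfl fun n _ => ?_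
      by_cases hn : n.Prime
      · simp [Set.indicator_apply, hn]
      · simp [Set.indicator_apply, hn]
    have hSF : S = F.erase p := by
      ext ℓ
      simp only [hSdef, hFdef, Finset.mem_filter, Finset.mem_erase, Finset.mem_range]
      tauto
    have h1 : ∑ ℓ ∈ F, (1 : ℝ) / ℓ ≤ ∑ ℓ ∈ S, (1 : ℝ) / ℓ + 1 / p := by
      rw [hSF]
      by_cases hpF : p ∈ F
      · rw [Finset.sum_erase_add F _ hpF]
      · rw [Finset.erase_eq_of_notMem hpF]
        have : (0 : ℝ) ≤ 1 / p := by positivity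
        linarith
    rw [h0] at hN
    linarith
  -- define i
  set P : ℕ := ∏ ℓ ∈ S, (ℓ - 1) with hPdef
  have hP1 : 1 ≤ P := Finset.one_le_prod' fun ℓ hℓ => by
    have := (hSprime ℓ hℓ).1.two_le; omega
  set i : ℕ := max i₀ 1 * P with hidef
  have hi1 : 1 ≤ i := Nat.one_le_iff_ne_zero.mpr (by positivity)
  have hii₀ : i₀ ≤ i :=
    le_trans (le_max_left i₀ 1) (Nat.le_mul_of_pos_right _ hP1)
  -- every ℓ ∈ S divides q ^ i - 1
  have hdvd : ∀ ℓ ∈ S, ℓ ∣ q ^ i - 1 := by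
    intro ℓ hℓ
    obtain ⟨hℓp, hℓne⟩ := hSprime ℓ hℓ
    have hco : Nat.Coprime q ℓ := by
      rw [hq]; exact Nat.Coprime.pow_left m ((Nat.coprime_primes hp hℓp).mpr hℓne.symm)
    have heuler : q ^ (ℓ - 1) ≡ 1 [MOD ℓ] := by
      have := Nat.ModEq.pow_totient hco
      rwa [Nat.totient_prime hℓp] at this
    have hdvd1 : ℓ ∣ q ^ (ℓ - 1) - 1 :=
      (Nat.modEq_iff_dvd' (Nat.one_le_pow _ _ (by omega))).mp heuler.symm
    obtain ⟨k, hk⟩ : (ℓ - 1) ∣ i :=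
      Dvd.dvd.mul_left (Finset.dvd_prod_of_mem _ hℓ) _
    have hdvd2 : q ^ (ℓ - 1) - 1 ∣ q ^ i - 1 := by
      have := Nat.sub_dvd_pow_sub_pow (q ^ (ℓ - 1)) 1 k
      rwa [one_pow, ← pow_mul, ← hk] at this
    exact hdvd1.trans hdvd2
  have hqi2 : 2 ≤ q ^ i := le_trans hq2 (Nat.le_self_pow (by omega) q)
  -- the key constant
  set C : ℝ := ∏ ℓ ∈ S, (1 - (ℓ : ℝ)⁻¹) with hCdef
  have hfac : ∀ ℓ ∈ S, 0 ≤ 1 - (ℓ : ℝ)⁻¹ := by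
    intro ℓ hℓ
    have h2 : 2 ≤ ℓ := (hSprime ℓ hℓ).1.two_le
    have : (ℓ : ℝ)⁻¹ ≤ 1 := by
      rw [inv_le_one_iff₀]; right; exact_mod_cast (by omega : 1 ≤ ℓ)
    linarith
  have hC0 : 0 ≤ C := Finset.prod_nonneg hfac
  -- each term of the average is bounded by C
  have hterm : ∀ n : ℕ, 1 ≤ n →
      (Nat.totient ((q ^ i) ^ n - 1) : ℝ) / ((q : ℝ) ^ i) ^ n ≤ C := by
    intro n hn
    set M : ℕ := (q ^ i) ^ n - 1 with hMdef
    have hM2 : 2 ≤ (q ^ i) ^ n := le_trans hqi2 (Nat.le_self_pow (by omega) _)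
    have hM0 : 0 < M := by omega
    have hsub : S ⊆ M.primeFactors := by
      intro ℓ hℓ
      have hd : ℓ ∣ M := by
        refine (hdvd ℓ hℓ).trans ?_
        have := Nat.sub_dvd_pow_sub_pow (q ^ i) 1 n
        rwa [one_pow] at this
      exact Nat.mem_primeFactors.mpr ⟨(hSprime ℓ hℓ).1, hd, by omega⟩
    have h1 := totient_div_le_prod hM0 hsub
    have hMle : (M : ℝ) ≤ ((q : ℝ) ^ i) ^ n := by
      have : ((q ^ i) ^ n : ℕ) = (((q : ℝ) ^ i) ^ n : ℝ) := by push_cast; ring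
      rw [← this]
      exact_mod_cast Nat.sub_le _ _
    have h2 : (Nat.totient M : ℝ) / ((q : ℝ) ^ i) ^ n ≤ (Nat.totient M : ℝ) / M :=
      div_le_div_of_nonneg_left (by positivity) (by exact_mod_cast hM0) hMle
    exact h2.trans h1
  -- hence rbar i ≤ C
  have hrle : rbar i ≤ C := by
    refine le_of_tendsto (hrbar i hi1) ?_
    filter_upwards [eventually_ge_atTop (1 : ℝ)] with x hx
    have hx0 : (0 : ℝ) < x := lt_of_lt_of_le one_pos hx
    rw [div_le_iff₀ hx0]
    calc ∑ n ∈ Finset.Icc 1 ⌊x⌋₊,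
          (Nat.totient ((q ^ i) ^ n - 1) : ℝ) / ((q : ℝ) ^ i) ^ n
        ≤ ∑ n ∈ Finset.Icc 1 ⌊x⌋₊, C :=
          Finset.sum_le_sum fun n hn => hterm n (Finset.mem_Icc.mp hn).1
      _ = (⌊x⌋₊ : ℝ) * C := by
          rw [Finset.sum_const, Nat.card_Icc]
          simp [nsmul_eq_mul]
      _ ≤ C * x := by
          rw [mul_comm]
          exact mul_le_mul_of_nonneg_left (Nat.floor_le hx0.le) hC0
  -- and C < ε
  have hCexp : C ≤ Real.exp (-∑ ℓ ∈ S, (1 : ℝ) / ℓ) := by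
    rw [← Finset.sum_neg_distrib, Real.exp_sum]
    refine Finset.prod_le_prod hfac fun ℓ hℓ => ?_
    rw [one_div]
    have := Real.add_one_le_exp (-(ℓ : ℝ)⁻¹)
    linarith
  have hlt : Real.exp (-∑ ℓ ∈ S, (1 : ℝ) / ℓ) < ε :=
    (Real.lt_log_iff_exp_lt hε).mp (by linarith)
  exact ⟨i, hii₀, hi1, lt_of_le_of_lt hrle (hCexp.trans_lt hlt)⟩
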